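/- Let F be a free group, let s₁, s₂ ∈ F generate a nonabelian subgroup, and let ε, b ∈ F with ε*b ≠ b*ε. Then for integers m ≠ n, there is no γ ∈ F with γ*s₁*γ⁻¹ = s₁, γ*s₂*γ⁻¹ = s₂, and γ*(ε^m * b * ε^(-m))*γ⁻¹ = ε^n * b * ε^(-n). In particular the triples (s₁, s₂, ε^m b ε^{-m}), m ∈ ℤ, lie in pairwise distinct conjugacy classes of triples. -/

import Mathlib

open FreeGroup

namespace Stmt5Aux

variable {α : Type*}

lemma toWord_mk_single_mul_cancel [DecidableEq α] (p : α × Bool) (g : FreeGroup α)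
    (t : List (α × Bool)) (h : g.toWord = (p.1, !p.2) :: t) :
    (FreeGroup.mk [p] * g).toWord = t := by
  conv_lhs => rw [← mk_toWord (x := g)]
  rw [mul_mk, toWord_mk]
  have hr : reduce g.toWord = g.toWord := reduce_toWord g
  have h2 : ([p] ++ g.toWord) = p :: g.toWord := rfl
  rw [h2, reduce.cons, hr, h]
  simp

lemma toWord_mk_single_mul_nocancel [DecidableEq α] (p : α × Bool) (g : FreeGroup α)
    (h : ∀ t, g.toWord ≠ (p.1, !p.2) :: t) :
    (FreeGroup.mk [p] * g).toWord = p :: g.toWord := by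
  conv_lhs => rw [← mk_toWord (x := g)]
  rw [mul_mk]
  have h2 : ([p] ++ g.toWord) = p :: g.toWord := rfl
  rw [h2, toWord_mk, reduce.cons, reduce_toWord g]
  rcases hw : g.toWord with _ | ⟨q, t⟩
  · rfl
  · have hq : q ≠ (p.1, !p.2) := fun hqe => h t (by rw [hw, hqe])
    have : ¬ (p.1 = q.1 ∧ p.2 = !q.2) := by
      rintro ⟨ha, hb⟩
      apply hq
      obtain ⟨q1, q2⟩ := q
      simp only at ha hb
      simp [← ha, hb]
    simp [this]

lemma invRev_cons (p : α × Bool) (t : List (α × Bool)) :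
    invRev (p :: t) = invRev t ++ [(p.1, !p.2)] := by
  simp [invRev]

lemma invRev_concat (p : α × Bool) (t : List (α × Bool)) :
    invRev (t ++ [p]) = (p.1, !p.2) :: invRev t := by
  simp [invRev]

lemma mk_single_x_true (x : α) : FreeGroup.mk [(x, true)] = of x := rfl

lemma mk_single_x_false (x : α) : FreeGroup.mk [(x, false)] = (of x)⁻¹ := by
  rw [← mk_single_x_true, inv_mk]
  simp [invRev]

/-- Core lemma: anything commuting with a generator is a power of that generator. -/
lemma mem_zpowers_of_commute_of [DecidableEq α] {x : α} (g : FreeGroup α)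
    (hc : Commute g (of x)) : g ∈ Subgroup.zpowers (of x) := by
  generalize hn : g.toWord.length = N
  induction N using Nat.strong_induction_on generalizing g with
  | _ N ih =>
    rcases hw : g.toWord with _ | ⟨p, t⟩
    · rw [toWord_eq_nil_iff.mp hw]
      exact Subgroup.one_mem _
    · have hnt : t.length + 1 = N := by rw [hw] at hn; simpa using hn
      by_cases hp1 : p = (x, true)
      · have h' : ((FreeGroup.mk [(x, false)]) * g).toWord = t :=
          toWord_mk_single_mul_cancel (x, false) g t (by simpa [hp1] using hw)
        have hcomm' : Commute ((FreeGroup.mk [(x, false)]) * g) (of x) := by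
          rw [mk_single_x_false]
          exact ((Commute.refl (of x)).inv_left).mul_left hc
        have hmem := ih t.length (by omega) _ hcomm' (by rw [h'])
        have hg : g = of x * ((FreeGroup.mk [(x, false)]) * g) := by
          rw [mk_single_x_false, mul_inv_cancel_left]
        rw [hg]
        exact Subgroup.mul_mem _ (Subgroup.mem_zpowers _) hmem
      · by_cases hp2 : p = (x, false)
        · have h' : ((FreeGroup.mk [(x, true)]) * g).toWord = t :=
            toWord_mk_single_mul_cancel (x, true) g t (by simpa [hp2] using hw)
          have hcomm' : Commute ((FreeGroup.mk [(x, true)]) * g) (of x) := by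
            rw [mk_single_x_true]
            exact (Commute.refl (of x)).mul_left hc
          have hmem := ih t.length (by omega) _ hcomm' (by rw [h'])
          have hg : g = (of x)⁻¹ * ((FreeGroup.mk [(x, true)]) * g) := by
            rw [mk_single_x_true, inv_mul_cancel_left]
          rw [hg]
          exact Subgroup.mul_mem _ (Subgroup.inv_mem _ (Subgroup.mem_zpowers _)) hmem
        · obtain ⟨s, ⟨q1, q2⟩, hsq⟩ : ∃ s q, g.toWord = s ++ [q] := by
            rcases List.eq_nil_or_concat g.toWord with h | ⟨L, bb, h⟩
            · rw [hw] at h; simp at h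
            · exact ⟨L, bb, by simpa [List.concat_eq_append] using h⟩
          have hslen : s.length + 1 = N := by
            have h1 := congrArg List.length hsq
            simp at h1
            omega
          have hginv : g⁻¹.toWord = (q1, !q2) :: invRev s := by
            rw [toWord_inv, hsq, invRev_concat]
          have hcinv : Commute g⁻¹ (of x) := hc.inv_left
          by_cases hq1 : (q1, q2) = ((x : α), true)
          · have h' : ((FreeGroup.mk [(x, true)]) * g⁻¹).toWord = invRev s := by
              apply toWord_mk_single_mul_cancel (x, true) g⁻¹ _
              rw [hginv]
              rw [Prod.mk.injEq] at hq1
              simp [hq1.1, hq1.2]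
            have hcomm' : Commute ((FreeGroup.mk [(x, true)]) * g⁻¹) (of x) := by
              rw [mk_single_x_true]
              exact (Commute.refl (of x)).mul_left hcinv
            have hmem := ih s.length (by omega) _ hcomm'
              (by rw [h', invRev_length])
            have hg : g⁻¹ = (of x)⁻¹ * ((FreeGroup.mk [(x, true)]) * g⁻¹) := by
              rw [mk_single_x_true, inv_mul_cancel_left]
            have hmem2 : g⁻¹ ∈ Subgroup.zpowers (of x) := by
              rw [hg]
              exact Subgroup.mul_mem _ (Subgroup.inv_mem _ (Subgroup.mem_zpowers _)) hmem
            simpa using Subgroup.inv_mem _ hmem2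
          · by_cases hq2 : (q1, q2) = ((x : α), false)
            · have h' : ((FreeGroup.mk [(x, false)]) * g⁻¹).toWord = invRev s := by
                apply toWord_mk_single_mul_cancel (x, false) g⁻¹ _
                rw [hginv]
                rw [Prod.mk.injEq] at hq2
                simp [hq2.1, hq2.2]
              have hcomm' : Commute ((FreeGroup.mk [(x, false)]) * g⁻¹) (of x) := by
                rw [mk_single_x_false]
                exact ((Commute.refl (of x)).inv_left).mul_left hcinv
              have hmem := ih s.length (by omega) _ hcomm'
                (by rw [h', invRev_length])
              have hg : g⁻¹ = of x * ((FreeGroup.mk [(x, false)]) * g⁻¹) := by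
                rw [mk_single_x_false, mul_inv_cancel_left]
              have hmem2 : g⁻¹ ∈ Subgroup.zpowers (of x) := by
                rw [hg]
                exact Subgroup.mul_mem _ (Subgroup.mem_zpowers _) hmem
              simpa using Subgroup.inv_mem _ hmem2
            · exfalso
              have hxg : (of x * g).toWord = (x, true) :: g.toWord := by
                rw [← mk_single_x_true]
                apply toWord_mk_single_mul_nocancel
                intro t' ht'
                rw [hw, List.cons.injEq] at ht'
                exact hp2 (by simpa using ht'.1)
              have hgx : ((of x)⁻¹ * g⁻¹).toWord = (x, false) :: g⁻¹.toWord := by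
                rw [← mk_single_x_false]
                apply toWord_mk_single_mul_nocancel
                intro t' ht'
                rw [hginv, List.cons.injEq, Prod.mk.injEq] at ht'
                apply hq2
                have h1 : q1 = x := ht'.1.1
                have h2 : q2 = false := by
                  have := ht'.1.2
                  simp only [Bool.not_eq_true'] at this
                  simpa using this
                rw [h1, h2]
              have hmulx : (g * of x).toWord = g.toWord ++ [(x, true)] := by
                have he : g * of x = ((of x)⁻¹ * g⁻¹)⁻¹ := by group
                rw [he, toWord_inv, hgx, invRev_cons, toWord_inv, invRev_invRev]
                rfl
              have hfin : (x, true) :: g.toWord = g.toWord ++ [(x, true)] := by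
                rw [← hxg, ← hmulx, hc.eq]
              rw [hw] at hfin
              injection hfin with hfh _
              exact hp1 hfh.symm

/-- An element commuting with two distinct generators is trivial. -/
lemma eq_one_of_commute_two {x y : α} (hxy : x ≠ y) {g : FreeGroup α}
    (hgx : Commute g (of x)) (hgy : Commute g (of y)) : g = 1 := by
  classical
  have hk' := mem_zpowers_of_commute_of g hgx
  have hl' := mem_zpowers_of_commute_of g hgy
  rw [Subgroup.mem_zpowers_iff] at hk' hl'
  obtain ⟨k, hk⟩ := hk'
  obtain ⟨l, hl⟩ := hl'
  by_contra hg
  have hk0 : k ≠ 0 := by rintro rfl; simp at hk; exact hg hk.symm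
  have hl0 : l ≠ 0 := by rintro rfl; simp at hl; exact hg hl.symm
  have key : ∀ (z : α) (j : ℤ), j ≠ 0 → (of z : FreeGroup α) ^ j = g →
      ∃ bb, g.toWord.head? = some (z, bb) := by
    intro z j hj hjg
    rcases Int.natAbs_eq j with h | h
    · have hgz : g = of z ^ (j.natAbs : ℕ) := by
        have hj' : (j.natAbs : ℤ) = j := by omega
        rw [← zpow_natCast, hj', hjg]
      refine ⟨true, ?_⟩
      rw [hgz, toWord_of_pow]
      cases hh : j.natAbs with
      | zero => omega
      | succ n => simp [List.replicate_succ]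
    · have hneg : (-j) = (j.natAbs : ℤ) := by omega
      have hgz : g⁻¹ = of z ^ (j.natAbs : ℕ) := by
        rw [← hjg, ← zpow_neg, hneg, zpow_natCast]
      have hwg : g.toWord = invRev (List.replicate j.natAbs (z, true)) := by
        conv_lhs => rw [← inv_inv g]
        rw [toWord_inv, hgz, toWord_of_pow]
      refine ⟨false, ?_⟩
      rw [hwg]
      simp only [invRev, List.map_replicate, List.reverse_replicate]
      cases hh : j.natAbs with
      | zero => omega
      | succ n => simp [List.replicate_succ]
  obtain ⟨b1, hb1⟩ := key x k hk0 hk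
  obtain ⟨b2, hb2⟩ := key y l hl0 hl
  rw [hb1] at hb2
  injection hb2 with h
  exact hxy (congrArg Prod.fst h)

lemma zpow_of_eq_one {x : α} {k : ℤ} (h : (of x : FreeGroup α) ^ k = 1) : k = 0 := by
  classical
  by_contra hk
  rcases Int.natAbs_eq k with he | he
  · have h2 : (of x : FreeGroup α) ^ (k.natAbs : ℕ) = 1 := by
      rw [← zpow_natCast, ← he, h]
    have := congrArg FreeGroup.norm h2
    rw [norm_of_pow] at this
    simp at this; omega
  · have hneg : (-k) = (k.natAbs : ℤ) := by omega
    have h3 : (of x : FreeGroup α) ^ (k.natAbs : ℕ) = 1 := by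
      rw [← zpow_natCast, ← hneg, zpow_neg, h, inv_one]
    have := congrArg FreeGroup.norm h3
    rw [norm_of_pow] at this
    simp at this; omega

lemma zpowers_eq_top_of_subsingleton {S : Type*} [Subsingleton S] (s₀ : S)
    (g : FreeGroup S) : g ∈ Subgroup.zpowers (of s₀) := by
  have h : Subgroup.closure (Set.range (of : S → FreeGroup S)) ≤ Subgroup.zpowers (of s₀) := by
    apply (Subgroup.closure_le _).mpr
    rintro _ ⟨t, rfl⟩
    have : t = s₀ := Subsingleton.elim _ _
    rw [this]
    exact Subgroup.mem_zpowers _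
  exact h (by rw [closure_range_of]; trivial)

lemma freeGroup_trivial_of_isEmpty {S : Type*} [IsEmpty S] (g : FreeGroup S) : g = 1 := by
  have h : Subgroup.closure (Set.range (of : S → FreeGroup S)) = ⊥ := by
    rw [Set.range_eq_empty, Subgroup.closure_empty]
  have hg : g ∈ Subgroup.closure (Set.range (of : S → FreeGroup S)) := by
    rw [closure_range_of]; trivial
  rw [h] at hg
  simpa using hg

lemma comm_of_subsingleton {S : Type*} [Subsingleton S] (a b : FreeGroup S) :
    Commute a b := by
  rcases isEmpty_or_nonempty S with h | ⟨⟨s₀⟩⟩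
  · rw [freeGroup_trivial_of_isEmpty a]; exact Commute.one_left _
  · obtain ⟨i, hi⟩ := Subgroup.mem_zpowers_iff.mp (zpowers_eq_top_of_subsingleton s₀ a)
    obtain ⟨j, hj⟩ := Subgroup.mem_zpowers_iff.mp (zpowers_eq_top_of_subsingleton s₀ b)
    rw [← hi, ← hj]
    exact (Commute.refl _).zpow_zpow i j

lemma tf_of_subsingleton {S : Type*} [Subsingleton S] (g : FreeGroup S) (k : ℤ)
    (h : g ^ k = 1) : k = 0 ∨ g = 1 := by
  rcases isEmpty_or_nonempty S with hS | ⟨⟨s₀⟩⟩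
  · exact Or.inr (freeGroup_trivial_of_isEmpty g)
  · obtain ⟨i, hi⟩ := Subgroup.mem_zpowers_iff.mp (zpowers_eq_top_of_subsingleton s₀ g)
    rw [← hi, ← zpow_mul] at h
    have h0 := zpow_of_eq_one h
    rcases mul_eq_zero.mp h0 with h1 | h1
    · right; rw [← hi, h1, zpow_zero]
    · left; exact h1

/-- In any free group, a central element is trivial or the group is commutative. -/
lemma central_cases {G : Type*} [Group G] [IsFreeGroup G] {z : G}
    (hz : ∀ g : G, Commute z g) : z = 1 ∨ ∀ a b : G, Commute a b := by
  classical
  set S := IsFreeGroup.Generators G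
  set e : G ≃* FreeGroup S := IsFreeGroup.toFreeGroup (G := G) with he
  by_cases hS : ∃ s t : S, s ≠ t
  · obtain ⟨s, t, hst⟩ := hS
    left
    have h1 : Commute (e z) (of s) := by
      have h := (hz (e.symm (of s))).eq
      have h2 := congrArg e h
      exact (by simpa using h2 : e z * of s = of s * e z)
    have h2 : Commute (e z) (of t) := by
      have h := (hz (e.symm (of t))).eq
      have h2 := congrArg e h
      exact (by simpa using h2 : e z * of t = of t * e z)
    have h3 : e z = 1 := eq_one_of_commute_two hst h1 h2
    have h4 := congrArg e.symm h3
    simpa using h4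
  · right
    push_neg at hS
    haveI : Subsingleton S := ⟨fun a b => hS a b⟩
    intro a b
    have h : Commute (e a) (e b) := comm_of_subsingleton _ _
    have h2 := congrArg e.symm h.eq
    exact (by simpa using h2 : a * b = b * a)

/-- Commutative transitivity in free groups. -/
lemma commute_trans {y : FreeGroup α} (hy : y ≠ 1) {a b : FreeGroup α}
    (ha : Commute a y) (hb : Commute b y) : Commute a b := by
  classical
  set H := Subgroup.centralizer ({y} : Set (FreeGroup α)) with hH
  have hyH : y ∈ H := by
    rw [hH, Subgroup.mem_centralizer_iff]
    rintro g hg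
    rw [Set.mem_singleton_iff] at hg
    rw [hg]
  have haH : a ∈ H := by
    rw [hH, Subgroup.mem_centralizer_iff]
    rintro g hg
    rw [Set.mem_singleton_iff] at hg
    rw [hg]
    exact ha.eq.symm
  have hbH : b ∈ H := by
    rw [hH, Subgroup.mem_centralizer_iff]
    rintro g hg
    rw [Set.mem_singleton_iff] at hg
    rw [hg]
    exact hb.eq.symm
  haveI : IsFreeGroup H := subgroupIsFreeOfIsFree H
  have hzcentral : ∀ g : H, Commute (⟨y, hyH⟩ : H) g := by
    rintro ⟨g, hg⟩
    rw [hH, Subgroup.mem_centralizer_iff] at hg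
    have hyg := hg y (Set.mem_singleton _)
    apply Subtype.ext
    show y * g = g * y
    exact hyg
  rcases central_cases hzcentral with h1 | h2
  · exact absurd (congrArg Subtype.val h1) hy
  · have h := (h2 ⟨a, haH⟩ ⟨b, hbH⟩).eq
    exact congrArg Subtype.val h

/-- Torsion-freeness of free groups. -/
lemma tf {g : FreeGroup α} {k : ℤ} (h : g ^ k = 1) : k = 0 ∨ g = 1 := by
  classical
  set H := Subgroup.zpowers g with hH
  haveI : IsFreeGroup H := subgroupIsFreeOfIsFree H
  set S := IsFreeGroup.Generators H
  set e : H ≃* FreeGroup S := IsFreeGroup.toFreeGroup (G := H) with he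
  have hcomm : ∀ u v : H, Commute u v := by
    rintro ⟨u, hu⟩ ⟨v, hv⟩
    obtain ⟨i, hi⟩ := Subgroup.mem_zpowers_iff.mp hu
    obtain ⟨j, hj⟩ := Subgroup.mem_zpowers_iff.mp hv
    apply Subtype.ext
    show u * v = v * u
    rw [← hi, ← hj]
    exact ((Commute.refl _).zpow_zpow i j).eq
  haveI : Subsingleton S := by
    by_contra hsub
    rw [not_subsingleton_iff_nontrivial] at hsub
    obtain ⟨s, t, hst⟩ := exists_pair_ne S
    have h1 : Commute (of s : FreeGroup S) (of t) := by
      have h := (hcomm (e.symm (of s)) (e.symm (of t))).eq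
      have h2 := congrArg e h
      exact (by simpa using h2 : (of s : FreeGroup S) * of t = of t * of s)
    have h3 : (of s : FreeGroup S) = 1 :=
      eq_one_of_commute_two hst (Commute.refl _) h1
    exact of_ne_one s h3
  have hgH : g ∈ H := Subgroup.mem_zpowers g
  have hk : (e ⟨g, hgH⟩) ^ k = 1 := by
    rw [← map_zpow]
    have h1 : (⟨g, hgH⟩ : H) ^ k = 1 := by
      apply Subtype.ext
      show g ^ k = 1
      exact h
    rw [h1]; exact _root_.map_one e
  rcases tf_of_subsingleton _ k hk with h0 | h0
  · exact Or.inl h0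
  · right
    have h1 : (⟨g, hgH⟩ : H) = 1 := by
      have h2 := congrArg e.symm h0
      simpa using h2
    exact congrArg Subtype.val h1

end Stmt5Aux

theorem stmt_5 {α : Type*} (s₁ s₂ : FreeGroup α)
    (hna : ∃ x ∈ Subgroup.closure {s₁, s₂}, ∃ y ∈ Subgroup.closure {s₁, s₂}, x * y ≠ y * x)
    (ε b : FreeGroup α) (hεb : ε * b ≠ b * ε) (m n : ℤ) (hmn : m ≠ n) :
    ¬ ∃ γ : FreeGroup α, γ * s₁ * γ⁻¹ = s₁ ∧ γ * s₂ * γ⁻¹ = s₂ ∧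
      γ * (ε ^ m * b * ε ^ (-m)) * γ⁻¹ = ε ^ n * b * ε ^ (-n) := by
  rintro ⟨γ, h1, h2, h3⟩
  have c1 : Commute s₁ γ := by
    rw [mul_inv_eq_iff_eq_mul] at h1
    exact Commute.symm h1
  have c2 : Commute s₂ γ := by
    rw [mul_inv_eq_iff_eq_mul] at h2
    exact Commute.symm h2
  have hγ : γ = 1 := by
    by_contra hγ
    obtain ⟨x, hx, y, hy, hxy⟩ := hna
    have hallx : ∀ z ∈ Subgroup.closure ({s₁, s₂} : Set (FreeGroup α)), Commute z γ := by
      intro z hz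
      induction hz using Subgroup.closure_induction with
      | mem w hw =>
        rcases hw with h | h
        · rw [h]; exact c1
        · rw [Set.mem_singleton_iff] at h; rw [h]; exact c2
      | one => exact Commute.one_left _
      | mul u v hu hv ihu ihv => exact ihu.mul_left ihv
      | inv u hu ihu => exact ihu.inv_left
    exact hxy (Stmt5Aux.commute_trans hγ (hallx x hx) (hallx y hy)).eq
  rw [hγ] at h3
  simp only [one_mul, inv_one, mul_one] at h3
  set k : ℤ := m - n with hk
  have hk0 : k ≠ 0 := sub_ne_zero.mpr hmn
  have hck : Commute (ε ^ k) b := by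
    have key : ε ^ k * b * (ε ^ k)⁻¹ = b := by
      calc ε ^ k * b * (ε ^ k)⁻¹
          = ε ^ (-n) * (ε ^ m * b * ε ^ (-m)) * ε ^ n := by
            rw [hk, ← zpow_neg, neg_sub]
            rw [show (m - n : ℤ) = -n + m by ring, show (n - m : ℤ) = -m + n by ring]
            rw [zpow_add, zpow_add]
            group
        _ = ε ^ (-n) * (ε ^ n * b * ε ^ (-n)) * ε ^ n := by rw [h3]
        _ = b := by group
    have h5 : ε ^ k * b = b * ε ^ k := by
      have h6 := congrArg (· * ε ^ k) key
      simpa [mul_assoc] using h6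
    exact h5
  by_cases hek : ε ^ k = 1
  · rcases Stmt5Aux.tf hek with h0 | h0
    · exact hk0 h0
    · apply hεb; rw [h0]; simp
  · have hcε : Commute ε (ε ^ k) := (Commute.refl ε).zpow_right k
    have hcb : Commute b (ε ^ k) := hck.symm
    exact hεb (Stmt5Aux.commute_trans hek hcε hcb).eq
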